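/- The class of nearly-monadic disjunctive programs is closed under binary resolution: if C₁ and C₂ are rules of a nearly-monadic program (each either a 'monadic-head' rule whose head atoms all have the form A(z) or R(z,z) for a single variable z and which mentions only unary and binary predicates, or a role rule of the form R(x,y)→S(x,y) or R(x,y)→S(y,x)), and C is a binary resolvent of C₁ and C₂ where at least one of C₁, C₂ is non-Horn, then C is again of one of these two forms. -/
import Mathlib


/-- Atoms over unary predicates `PU` and binary predicates `PB`, with variable
arguments (rules are function-free and constant-free). -/
inductive NAt (PU PB V : Type) : Type
  | un : PU → V → NAt PU PB V
  | bin : PB → V → V → NAt PU PB V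
deriving DecidableEq

/-- A literal: a sign (`true` = positive, i.e. a head atom) and an atom. -/
abbrev NLit (PU PB V : Type) := Bool × NAt PU PB V

def substNAt {PU PB V : Type} (σ : V → V) : NAt PU PB V → NAt PU PB V
  | .un A v => .un A (σ v)
  | .bin R v w => .bin R (σ v) (σ w)

def substNLit {PU PB V : Type} (σ : V → V) (l : NLit PU PB V) : NLit PU PB V :=
  (l.1, substNAt σ l.2)

/-- A 'monadic-head' rule: every head (positive) atom is of the form `A(z)` or
`R(z,z)` for a variable `z` (and only unary/binary predicates are mentioned). -/
def MonadicHead {PU PB V : Type} (Cl : Finset (NLit PU PB V)) : Prop :=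
  ∀ l ∈ Cl, l.1 = true →
    (∃ (A : PU) (z : V), l.2 = NAt.un A z) ∨ (∃ (R : PB) (z : V), l.2 = NAt.bin R z z)

/-- A role rule: `R(x,y) → S(x,y)` or `R(x,y) → S(y,x)`. -/
def RoleRule {PU PB V : Type} [DecidableEq PU] [DecidableEq PB] [DecidableEq V]
    (Cl : Finset (NLit PU PB V)) : Prop :=
  ∃ (R S : PB) (x y : V), x ≠ y ∧
    (Cl = {(false, NAt.bin (PU := PU) R x y), (true, NAt.bin S x y)} ∨
     Cl = {(false, NAt.bin (PU := PU) R x y), (true, NAt.bin S y x)})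

/-- A clause is non-Horn if it has at least two positive literals. -/
def NonHorn {PU PB V : Type} [DecidableEq PU] [DecidableEq PB] [DecidableEq V]
    (Cl : Finset (NLit PU PB V)) : Prop :=
  1 < (Cl.filter fun l => l.1 = true).card

/-- `σ` is a most general unifier of atoms `A` and `B`. -/
def IsMGUN {PU PB V : Type} (σ : V → V) (A B : NAt PU PB V) : Prop :=
  substNAt σ A = substNAt σ B ∧
  ∀ τ : V → V, substNAt τ A = substNAt τ B → ∃ δ : V → V, ∀ v, δ (σ v) = τ v

/-- `Cl` is a binary resolvent of `C₁` and `C₂`. -/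
def Resolvent {PU PB V : Type} [DecidableEq PU] [DecidableEq PB] [DecidableEq V]
    (Cl C₁ C₂ : Finset (NLit PU PB V)) : Prop :=
  ∃ (A B : NAt PU PB V) (σ : V → V),
    (true, A) ∈ C₁ ∧ (false, B) ∈ C₂ ∧ IsMGUN σ A B ∧
    Cl = ((C₁.erase (true, A)) ∪ (C₂.erase (false, B))).image (substNLit σ)

lemma role_not_nonhorn {PU PB V : Type} [DecidableEq PU] [DecidableEq PB] [DecidableEq V]
    {Cl : Finset (NLit PU PB V)} (h : RoleRule Cl) : ¬ NonHorn Cl := by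
  obtain ⟨R, S, x, y, hxy, h | h⟩ := h <;>
  · subst h
    simp [NonHorn, Finset.filter_insert, Finset.filter_singleton]

/-- nearly-monadic programs are closed under binary resolution: if `C₁`
and `C₂` are each a monadic-head rule or a role rule, at least one of them is
non-Horn, and `Cl` is a binary resolvent of `C₁` and `C₂`, then `Cl` is again a
monadic-head rule or a role rule. -/
theorem nearly_monadic_closed_under_resolution {PU PB V : Type}
    [DecidableEq PU] [DecidableEq PB] [DecidableEq V]
    (C₁ C₂ Cl : Finset (NLit PU PB V))
    (h1 : MonadicHead C₁ ∨ RoleRule C₁)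
    (h2 : MonadicHead C₂ ∨ RoleRule C₂)
    (hnh : NonHorn C₁ ∨ NonHorn C₂)
    (hres : Resolvent Cl C₁ C₂) :
    MonadicHead Cl ∨ RoleRule Cl := by
  obtain ⟨A, B, σ, hA, hB, hmgu, hCl⟩ := hres
  rcases h1 with h1 | h1
  · rcases h2 with h2 | h2
    · -- monadic / monadic
      left
      intro l hl hlpos
      rw [hCl, Finset.mem_image] at hl
      obtain ⟨m, hm, rfl⟩ := hl
      have hsign : m.1 = true := hlpos
      rw [Finset.mem_union] at hm
      have hmem : m ∈ C₁ ∨ m ∈ C₂ := by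
        rcases hm with hm | hm
        · exact Or.inl (Finset.mem_of_mem_erase hm)
        · exact Or.inr (Finset.mem_of_mem_erase hm)
      have hform := hmem.elim (fun h => h1 m h hsign) (fun h => h2 m h hsign)
      rcases hform with ⟨A', z, hz⟩ | ⟨R, z, hz⟩
      · exact Or.inl ⟨A', σ z, by simp [substNLit, hz, substNAt]⟩
      · exact Or.inr ⟨R, σ z, by simp [substNLit, hz, substNAt]⟩
    · -- monadic / role
      left
      obtain ⟨R, S, x, y, hxy, hC⟩ := h2
      have hBeq : B = NAt.bin R x y := by
        rcases hC with hC | hC <;> rw [hC] at hB <;>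
          simpa [Prod.ext_iff] using hB
      -- A is monadic, and unifies with B, so σ x = σ y
      have hAform := h1 _ hA rfl
      have hxy2 : σ x = σ y := by
        have h1' := hmgu.1
        rw [hBeq] at h1'
        rcases hAform with ⟨A', z, hz⟩ | ⟨T, z, hz⟩
        · have hz' : A = NAt.un A' z := hz
          rw [hz'] at h1'; simp [substNAt] at h1'
        · have hz' : A = NAt.bin T z z := hz
          rw [hz'] at h1'; simp [substNAt] at h1'
          exact h1'.2.1.symm.trans h1'.2.2
      intro l hl hlpos
      rw [hCl, Finset.mem_image] at hl
      obtain ⟨m, hm, rfl⟩ := hl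
      have hsign : m.1 = true := hlpos
      rw [Finset.mem_union] at hm
      rcases hm with hm | hm
      · have hform := h1 m (Finset.mem_of_mem_erase hm) hsign
        rcases hform with ⟨A', z, hz⟩ | ⟨T, z, hz⟩
        · exact Or.inl ⟨A', σ z, by simp [substNLit, hz, substNAt]⟩
        · exact Or.inr ⟨T, σ z, by simp [substNLit, hz, substNAt]⟩
      · have hm2 := Finset.mem_of_mem_erase hm
        rcases hC with hC | hC <;> rw [hC] at hm2 <;>
          rw [Finset.mem_insert, Finset.mem_singleton] at hm2 <;>
          rcases hm2 with hm2 | hm2 <;>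
          first
          | (exfalso; rw [hm2] at hsign; exact Bool.noConfusion hsign)
          | (refine Or.inr ⟨S, σ x, ?_⟩;
             simp [substNLit, hm2, substNAt, hxy2])
  · rcases h2 with h2 | h2
    · -- role / monadic
      left
      obtain ⟨R, S, x, y, hxy, hC⟩ := h1
      intro l hl hlpos
      rw [hCl, Finset.mem_image] at hl
      obtain ⟨m, hm, rfl⟩ := hl
      have hsign : m.1 = true := hlpos
      rw [Finset.mem_union] at hm
      rcases hm with hm | hm
      · exfalso
        have hne := Finset.ne_of_mem_erase hm
        have hm2 := Finset.mem_of_mem_erase hm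
        -- (true, A) is the unique positive literal of C₁
        rcases hC with hC | hC <;> rw [hC] at hm2 hA <;>
          rw [Finset.mem_insert, Finset.mem_singleton] at hm2 hA <;>
          rcases hA with hA | hA <;>
          (try exact Bool.noConfusion (congrArg Prod.fst hA)) <;>
          rcases hm2 with hm2 | hm2 <;>
          first
          | (rw [hm2] at hsign; exact Bool.noConfusion hsign)
          | (exact hne (hm2.trans hA.symm))
      · have hform := h2 m (Finset.mem_of_mem_erase hm) hsign
        rcases hform with ⟨A', z, hz⟩ | ⟨T, z, hz⟩
        · exact Or.inl ⟨A', σ z, by simp [substNLit, hz, substNAt]⟩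
        · exact Or.inr ⟨T, σ z, by simp [substNLit, hz, substNAt]⟩
    · -- role / role : contradicts non-Horn
      exfalso
      rcases hnh with hn | hn
      · exact role_not_nonhorn h1 hn
      · exact role_not_nonhorn h2 hn
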